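/- Corollary 3.0(i): Let p ∈ [1,∞). The integral operator K defined by (K f)(x) = Σ_m ‖ψ_m‖₁^{−1} ψ_m(x) ∫_{ℝ^d} ψ_m(y) f(y) dy maps L^p(ℝ^d) into itself and satisfies ‖K f‖_{L^p(ℝ^d)} ≤ ‖f‖_{L^p(ℝ^d)} for every f ∈ L^p(ℝ^d). -/

import Mathlib

open MeasureTheory

noncomputable section

/-- The canonical hat function on `ℝ`. -/
def hat (t : ℝ) : ℝ := max 0 (1 - |t|)

/-- The `i`-th coordinate of the grid-knot `x_m = v + h * r * m`. -/
def gridKnot (d : ℕ) (h : ℝ) (r : Fin d → ℕ) (v : Fin d → ℝ) (m : Fin d → ℤ) (i : Fin d) : ℝ :=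
  v i + h * (r i : ℝ) * (m i : ℝ)

/-- The `d`-dimensional hat function centered at the grid-knot `x_m`. -/
def psi (d : ℕ) (h : ℝ) (r : Fin d → ℕ) (v : Fin d → ℝ) (m : Fin d → ℤ) (x : Fin d → ℝ) : ℝ :=
  ∏ i, hat ((x i - gridKnot d h r v m i) / (h * (r i : ℝ)))

/-- The hat-function imbedding `u(n) = Σ_m u_m ψ_m`. -/
def imbed (d : ℕ) (h : ℝ) (r : Fin d → ℕ) (v : Fin d → ℝ) (u : (Fin d → ℤ) → ℝ)
    (x : Fin d → ℝ) : ℝ :=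
  ∑' m : Fin d → ℤ, u m * psi d h r v m x

/-- `vol(R) = r₁ ⋯ r_d`. -/
def volR (d : ℕ) (r : Fin d → ℕ) : ℝ := ∏ i, (r i : ℝ)

/-- Forward finite difference `(U_i u)_m = (u_{m+e_i} - u_m)/(r_i h)`. -/
def fdiff (d : ℕ) (h : ℝ) (r : Fin d → ℕ) (u : (Fin d → ℤ) → ℝ) (i : Fin d)
    (m : Fin d → ℤ) : ℝ :=
  (u (m + Pi.single i 1) - u m) / ((r i : ℝ) * h)

/-- The discrete norm `|u|²_{R2} = vol(R) Σ_m u_m²`. -/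
def norm2R (d : ℕ) (r : Fin d → ℕ) (u : (Fin d → ℤ) → ℝ) : ℝ :=
  volR d r * ∑' m : Fin d → ℤ, u m ^ 2

/-- The discrete Dirichlet form `q_R(u) = vol(R) Σ_i Σ_m (U_i u)_m²`. -/
def qR (d : ℕ) (h : ℝ) (r : Fin d → ℕ) (u : (Fin d → ℤ) → ℝ) : ℝ :=
  volR d r * ∑ i : Fin d, ∑' m : Fin d → ℤ, (fdiff d h r u i m) ^ 2


/-- The integral operator `K` with kernel `ω(x,y) = Σ_m ‖ψ_m‖₁⁻¹ ψ_m(x) ψ_m(y)`,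
where `‖ψ_m‖₁ = h^d vol(R)`. -/
def hatOp (d : ℕ) (h : ℝ) (r : Fin d → ℕ) (v : Fin d → ℝ) (f : (Fin d → ℝ) → ℝ)
    (x : Fin d → ℝ) : ℝ :=
  ∑' m : Fin d → ℤ, (h ^ d * volR d r)⁻¹ * psi d h r v m x *
    ∫ y : Fin d → ℝ, psi d h r v m y * f y


section AuxHat

lemma hat_nonneg (t : ℝ) : 0 ≤ hat t := le_max_left _ _

lemma hat_le_one (t : ℝ) : hat t ≤ 1 := by
  unfold hat; rcases le_total 0 (1 - |t|) with h | h
  · rw [max_eq_right h]; linarith [abs_nonneg t]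
  · rw [max_eq_left h]; norm_num

lemma hat_eq_zero {t : ℝ} (ht : 1 ≤ |t|) : hat t = 0 := by
  unfold hat; rw [max_eq_left]; linarith

lemma hat_of_abs_le {t : ℝ} (ht : |t| ≤ 1) : hat t = 1 - |t| := by
  unfold hat; rw [max_eq_right]; linarith

lemma continuous_hat : Continuous hat :=
  continuous_const.max (continuous_const.sub continuous_abs)

lemma hat_vanish {t : ℝ} {n : ℤ} (hn : n ∉ ({⌊t⌋, ⌊t⌋ + 1} : Finset ℤ)) :
    hat (t - n) = 0 := by
  simp only [Finset.mem_insert, Finset.mem_singleton] at hn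
  push_neg at hn
  apply hat_eq_zero
  by_contra hc
  push_neg at hc
  have h1 := Int.floor_le t
  have h2 := Int.lt_floor_add_one t
  cases abs_lt.1 hc with
  | intro a b =>
    have h1' : ⌊t⌋ - 1 < n := by
      have : (⌊t⌋ : ℝ) - 1 < (n : ℝ) := by linarith
      exact_mod_cast this
    have h2' : n < ⌊t⌋ + 2 := by
      have : (n : ℝ) < (⌊t⌋ : ℝ) + 2 := by linarith
      exact_mod_cast this
    rcases hn with ⟨hn1, hn2⟩
    omega

/-- 1D partition of unity. -/
lemma hat_hasSum (t : ℝ) : HasSum (fun n : ℤ => hat (t - n)) 1 := by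
  have key : ∀ n : ℤ, n ∉ ({⌊t⌋, ⌊t⌋ + 1} : Finset ℤ) → hat (t - n) = 0 :=
    fun n hn => hat_vanish hn
  have hsum := hasSum_sum_of_ne_finset_zero (L := SummationFilter.unconditional ℤ) (s := ({⌊t⌋, ⌊t⌋ + 1} : Finset ℤ)) key
  have hfl := Int.floor_le t
  have hfl2 := Int.lt_floor_add_one t
  have hval : (∑ n ∈ ({⌊t⌋, ⌊t⌋ + 1} : Finset ℤ), hat (t - n)) = 1 := by
    rw [Finset.sum_insert (by simp), Finset.sum_singleton]
    rw [hat_of_abs_le (by rw [abs_of_nonneg (by linarith)]; linarith),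
        hat_of_abs_le (by push_cast; rw [abs_of_nonpos (by linarith)]; linarith)]
    push_cast
    rw [abs_of_nonneg (by linarith), abs_of_nonpos (by push_cast; linarith)]
    ring
  rwa [hval] at hsum

lemma hat_eq_indicator : hat = Set.indicator (Set.Icc (-1 : ℝ) 1) (fun t => 1 - |t|) := by
  funext t
  rcases le_or_gt (|t|) 1 with h | h
  · rw [Set.indicator_of_mem (by rw [Set.mem_Icc, ← abs_le]; exact h)]
    unfold hat; rw [max_eq_right]; linarith
  · rw [Set.indicator_of_notMem (by rw [Set.mem_Icc, ← abs_le]; exact not_le.2 h)]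
    exact hat_eq_zero h.le

lemma integrable_hat : MeasureTheory.Integrable hat := by
  rw [hat_eq_indicator, MeasureTheory.integrable_indicator_iff measurableSet_Icc]
  exact ((continuous_const.sub continuous_abs).continuousOn).integrableOn_compact isCompact_Icc

lemma integral_hat : ∫ t, hat t = 1 := by
  rw [hat_eq_indicator, MeasureTheory.integral_indicator measurableSet_Icc]
  rw [MeasureTheory.integral_Icc_eq_integral_Ioc,
    ← intervalIntegral.integral_of_le (by norm_num : (-1:ℝ) ≤ 1)]
  have h1 : ∫ x in (-1:ℝ)..0, (1 - |x|) = ∫ x in (-1:ℝ)..0, (1 + x) := by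
    apply intervalIntegral.integral_congr
    intro x hx
    rw [Set.uIcc_of_le (by norm_num : (-1:ℝ) ≤ 0), Set.mem_Icc] at hx
    simp only []
    rw [abs_of_nonpos hx.2]; ring
  have h2 : ∫ x in (0:ℝ)..1, (1 - |x|) = ∫ x in (0:ℝ)..1, (1 - x) := by
    apply intervalIntegral.integral_congr
    intro x hx
    rw [Set.uIcc_of_le (by norm_num : (0:ℝ) ≤ 1), Set.mem_Icc] at hx
    simp only []
    rw [abs_of_nonneg hx.1]
  rw [← intervalIntegral.integral_add_adjacent_intervals
    (a := (-1:ℝ)) (b := 0) (c := 1)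
    (by apply IntervalIntegrable.sub; exact intervalIntegrable_const
        exact (continuous_abs).intervalIntegrable _ _)
    (by apply IntervalIntegrable.sub; exact intervalIntegrable_const
        exact (continuous_abs).intervalIntegrable _ _), h1, h2]
  rw [intervalIntegral.integral_add intervalIntegrable_const
    (continuous_id'.intervalIntegrable _ _),
    intervalIntegral.integral_sub intervalIntegrable_const
    (continuous_id'.intervalIntegrable _ _)]
  simp [integral_id]
  norm_num

lemma integral_hat_scaled {a s : ℝ} (hs : 0 < s) :
    ∫ t : ℝ, hat ((t - a) / s) = s := by
  have h1 : ∫ t : ℝ, hat ((t - a) / s) = ∫ t : ℝ, hat (t / s) :=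
    MeasureTheory.integral_sub_right_eq_self (fun t => hat (t / s)) a
  rw [h1, MeasureTheory.Measure.integral_comp_div hat s, integral_hat, abs_of_pos hs]
  simp

end AuxHat

section AuxPsi

variable {d : ℕ} {h : ℝ} {r : Fin d → ℕ} {v : Fin d → ℝ}

lemma hrpos (hh : 0 < h) (hr : ∀ i, 0 < r i) (i : Fin d) : 0 < h * (r i : ℝ) := by
  have := hr i
  positivity

lemma psi_nonneg (m : Fin d → ℤ) (x : Fin d → ℝ) : 0 ≤ psi d h r v m x :=
  Finset.prod_nonneg fun i _ => hat_nonneg _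

lemma psi_le_one (m : Fin d → ℤ) (x : Fin d → ℝ) : psi d h r v m x ≤ 1 :=
  Finset.prod_le_one (fun i _ => hat_nonneg _) (fun i _ => hat_le_one _)

lemma continuous_psi (m : Fin d → ℤ) : Continuous (psi d h r v m) :=
  continuous_finset_prod _ fun i _ =>
    continuous_hat.comp (((continuous_apply i).sub continuous_const).div_const _)

lemma psi_eq (hh : 0 < h) (hr : ∀ i, 0 < r i) (m : Fin d → ℤ) (x : Fin d → ℝ) :
    psi d h r v m x = ∏ i, hat ((x i - v i) / (h * (r i : ℝ)) - (m i : ℝ)) := by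
  unfold psi gridKnot
  refine Finset.prod_congr rfl fun i _ => ?_
  congr 1
  have : h * (r i : ℝ) ≠ 0 := (hrpos hh hr i).ne'
  field_simp
  have : (r i : ℝ) ≠ 0 := by have := hr i; positivity
  field_simp
  ring

/-- The finitely many indices whose hat functions are nonzero at `x`. -/
def psiSupp (d : ℕ) (h : ℝ) (r : Fin d → ℕ) (v : Fin d → ℝ) (x : Fin d → ℝ) :
    Finset (Fin d → ℤ) :=
  Fintype.piFinset fun i =>
    ({⌊(x i - v i) / (h * (r i : ℝ))⌋, ⌊(x i - v i) / (h * (r i : ℝ))⌋ + 1} : Finset ℤ)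

lemma psi_eq_zero_of_not_mem_psiSupp (hh : 0 < h) (hr : ∀ i, 0 < r i)
    {m : Fin d → ℤ} {x : Fin d → ℝ} (hm : m ∉ psiSupp d h r v x) :
    psi d h r v m x = 0 := by
  rw [psiSupp, Fintype.mem_piFinset] at hm
  push_neg at hm
  obtain ⟨i, hi⟩ := hm
  rw [psi_eq hh hr]
  exact Finset.prod_eq_zero (Finset.mem_univ i) (hat_vanish hi)

/-- Partition of unity: `∑ₘ ψₘ(x) = 1`. -/
lemma psi_hasSum (hh : 0 < h) (hr : ∀ i, 0 < r i) (x : Fin d → ℝ) :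
    HasSum (fun m : Fin d → ℤ => psi d h r v m x) 1 := by
  set t : Fin d → ℝ := fun i => (x i - v i) / (h * (r i : ℝ)) with ht
  have hsum := hasSum_sum_of_ne_finset_zero (L := SummationFilter.unconditional (Fin d → ℤ)) (s := psiSupp d h r v x)
    (fun m hm => psi_eq_zero_of_not_mem_psiSupp hh hr hm)
  have hval : (∑ m ∈ psiSupp d h r v x, psi d h r v m x) = 1 := by
    have hc : ∀ m ∈ psiSupp d h r v x, psi d h r v m x = ∏ i, hat (t i - (m i : ℝ)) := by
      intro m _; rw [psi_eq hh hr]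
    rw [Finset.sum_congr rfl hc, psiSupp,
      ← Finset.prod_univ_sum (fun i => ({⌊t i⌋, ⌊t i⌋ + 1} : Finset ℤ))
        (fun i n => hat (t i - (n : ℝ)))]
    have h1 : ∀ i : Fin d, (∑ n ∈ ({⌊t i⌋, ⌊t i⌋ + 1} : Finset ℤ), hat (t i - (n : ℝ))) = 1 :=
      fun i => (hasSum_sum_of_ne_finset_zero (L := SummationFilter.unconditional ℤ)
        (s := ({⌊t i⌋, ⌊t i⌋ + 1} : Finset ℤ)) (fun n hn => hat_vanish hn)).unique
        (hat_hasSum (t i))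
    rw [Finset.prod_congr rfl fun i _ => h1 i, Finset.prod_const_one]
  rwa [hval] at hsum

lemma volR_pos (hr : ∀ i, 0 < r i) : 0 < volR d r :=
  Finset.prod_pos fun i _ => by exact_mod_cast hr i

lemma normPsi_pos (hh : 0 < h) (hr : ∀ i, 0 < r i) : 0 < h ^ d * volR d r := by
  have := volR_pos (d := d) hr
  positivity

lemma integral_psi (hh : 0 < h) (hr : ∀ i, 0 < r i) (m : Fin d → ℤ) :
    ∫ y : Fin d → ℝ, psi d h r v m y = h ^ d * volR d r := by
  unfold psi
  rw [MeasureTheory.integral_fintype_prod_volume_eq_prod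
    (f := fun i yi => hat ((yi - gridKnot d h r v m i) / (h * (r i : ℝ))))]
  have hs : ∀ i : Fin d,
      (∫ yi : ℝ, hat ((yi - gridKnot d h r v m i) / (h * (r i : ℝ)))) = h * (r i : ℝ) :=
    fun i => integral_hat_scaled (hrpos hh hr i)
  rw [Finset.prod_congr rfl fun i _ => hs i, Finset.prod_mul_distrib, Finset.prod_const,
    Finset.card_univ, Fintype.card_fin]
  rfl

/-- The box containing the support of `ψₘ`. -/
def psiBox (d : ℕ) (h : ℝ) (r : Fin d → ℕ) (v : Fin d → ℝ) (m : Fin d → ℤ) :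
    Set (Fin d → ℝ) :=
  Set.univ.pi fun i =>
    Set.Icc (gridKnot d h r v m i - h * (r i : ℝ)) (gridKnot d h r v m i + h * (r i : ℝ))

lemma measurableSet_psiBox (m : Fin d → ℤ) : MeasurableSet (psiBox d h r v m) :=
  MeasurableSet.univ_pi fun i => measurableSet_Icc

lemma volume_psiBox_lt_top (m : Fin d → ℤ) :
    MeasureTheory.volume (psiBox d h r v m) < ⊤ := by
  rw [psiBox, MeasureTheory.volume_pi_pi]
  exact ENNReal.prod_lt_top fun i _ => by rw [Real.volume_Icc]; exact ENNReal.ofReal_lt_top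

lemma abs_psi_le_indicator (hh : 0 < h) (hr : ∀ i, 0 < r i) (m : Fin d → ℤ) (x : Fin d → ℝ) :
    |psi d h r v m x| ≤ (psiBox d h r v m).indicator (fun _ => (1 : ℝ)) x := by
  rw [abs_of_nonneg (psi_nonneg m x)]
  by_cases hx : x ∈ psiBox d h r v m
  · rw [Set.indicator_of_mem hx]
    exact psi_le_one m x
  · rw [Set.indicator_of_notMem hx]
    rw [psiBox, Set.mem_pi] at hx
    push_neg at hx
    obtain ⟨i, _, hi⟩ := hx
    have hip := hrpos hh hr i
    rw [Set.mem_Icc] at hi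
    push_neg at hi
    have habs : 1 ≤ |(x i - gridKnot d h r v m i) / (h * (r i : ℝ))| := by
      rw [abs_div, abs_of_pos hip, le_div_iff₀ hip, one_mul]
      rcases lt_or_ge (x i) (gridKnot d h r v m i - h * (r i : ℝ)) with hl | hl
      · rw [abs_of_nonpos (by linarith)]; linarith
      · have := hi hl
        rw [abs_of_nonneg (by linarith)]; linarith
    unfold psi
    exact le_of_eq (Finset.prod_eq_zero (Finset.mem_univ i) (hat_eq_zero habs))

lemma integrable_psi (hh : 0 < h) (hr : ∀ i, 0 < r i) (m : Fin d → ℤ) :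
    MeasureTheory.Integrable (psi d h r v m) := by
  refine MeasureTheory.Integrable.mono'
    (g := (psiBox d h r v m).indicator fun _ => (1 : ℝ))
    ((MeasureTheory.integrable_indicator_iff (measurableSet_psiBox m)).2
      (MeasureTheory.integrableOn_const (volume_psiBox_lt_top m).ne))
    (continuous_psi m).aestronglyMeasurable
    (MeasureTheory.ae_of_all _ fun x => ?_)
  rw [Real.norm_eq_abs]
  exact abs_psi_le_indicator hh hr m x

lemma integrable_psi_mul (hh : 0 < h) (hr : ∀ i, 0 < r i) {p : ℝ} (hp : 1 ≤ p)
    {f : (Fin d → ℝ) → ℝ}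
    (hf : MeasureTheory.MemLp f (ENNReal.ofReal p) (MeasureTheory.volume : MeasureTheory.Measure (Fin d → ℝ)))
    (m : Fin d → ℤ) :
    MeasureTheory.Integrable (fun y => psi d h r v m y * f y) := by
  have hbox := volume_psiBox_lt_top (h := h) (r := r) (v := v) m
  haveI : Fact (MeasureTheory.volume (psiBox d h r v m) < ⊤) := ⟨hbox⟩
  have hint : MeasureTheory.IntegrableOn (fun y => ‖f y‖) (psiBox d h r v m) :=
    ((hf.restrict (psiBox d h r v m)).integrable
      (by rwa [ENNReal.one_le_ofReal])).norm
  refine MeasureTheory.Integrable.mono'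
    (g := (psiBox d h r v m).indicator fun y => ‖f y‖)
    ((MeasureTheory.integrable_indicator_iff (measurableSet_psiBox m)).2 hint)
    ((continuous_psi m).aestronglyMeasurable.mul hf.aestronglyMeasurable)
    (MeasureTheory.ae_of_all _ fun y => ?_)
  rw [Real.norm_eq_abs, abs_mul]
  by_cases hy : y ∈ psiBox d h r v m
  · rw [Set.indicator_of_mem hy]
    calc |psi d h r v m y| * |f y| ≤ 1 * |f y| := by
          apply mul_le_mul_of_nonneg_right _ (abs_nonneg _)
          rw [abs_of_nonneg (psi_nonneg m y)]; exact psi_le_one m y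
      _ = ‖f y‖ := by rw [one_mul, Real.norm_eq_abs]
  · rw [Set.indicator_of_notMem hy]
    have h0 := abs_psi_le_indicator (v := v) hh hr m y
    rw [Set.indicator_of_notMem hy] at h0
    have : |psi d h r v m y| = 0 := le_antisymm h0 (abs_nonneg _)
    rw [this, zero_mul]

end AuxPsi

section AuxKernel
open MeasureTheory ENNReal

variable {d : ℕ} {h : ℝ} {r : Fin d → ℕ} {v : Fin d → ℝ}

/-- The kernel `ω(x,y)` of the operator `K`, as an `ℝ≥0∞`-valued function. -/
def Wker (d : ℕ) (h : ℝ) (r : Fin d → ℕ) (v : Fin d → ℝ) (x y : Fin d → ℝ) : ℝ≥0∞ :=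
  ∑' m : Fin d → ℤ,
    ENNReal.ofReal ((h ^ d * volR d r)⁻¹ * psi d h r v m x) * ENNReal.ofReal (psi d h r v m y)

lemma measurable_Wker_right (x : Fin d → ℝ) : Measurable (Wker d h r v x) :=
  Measurable.ennreal_tsum fun m =>
    (((continuous_psi m).measurable).ennreal_ofReal).const_mul _

lemma Wker_symm (hh : 0 < h) (hr : ∀ i, 0 < r i) (x y : Fin d → ℝ) :
    Wker d h r v x y = Wker d h r v y x := by
  unfold Wker
  refine tsum_congr fun m => ?_
  have hc : (0:ℝ) ≤ (h ^ d * volR d r)⁻¹ := inv_nonneg.2 (normPsi_pos hh hr).le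
  rw [ENNReal.ofReal_mul hc, ENNReal.ofReal_mul hc]
  ring

lemma measurable_Wker_uncurry :
    Measurable (fun z : (Fin d → ℝ) × (Fin d → ℝ) => Wker d h r v z.1 z.2) :=
  Measurable.ennreal_tsum fun m =>
    ((((continuous_psi m).measurable.comp measurable_fst).const_mul _).ennreal_ofReal).mul
      (((continuous_psi m).measurable.comp measurable_snd).ennreal_ofReal)

lemma lintegral_ofReal_psi (hh : 0 < h) (hr : ∀ i, 0 < r i) (m : Fin d → ℤ) :
    ∫⁻ y : Fin d → ℝ, ENNReal.ofReal (psi d h r v m y) = ENNReal.ofReal (h ^ d * volR d r) := by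
  rw [← MeasureTheory.ofReal_integral_eq_lintegral_ofReal (integrable_psi hh hr m)
    (MeasureTheory.ae_of_all _ (psi_nonneg m)), integral_psi hh hr]

lemma lintegral_Wker (hh : 0 < h) (hr : ∀ i, 0 < r i) (x : Fin d → ℝ) :
    ∫⁻ y : Fin d → ℝ, Wker d h r v x y = 1 := by
  have hcpos := normPsi_pos (d := d) (r := r) hh hr
  unfold Wker
  rw [MeasureTheory.lintegral_tsum fun m =>
    ((((continuous_psi m).measurable).ennreal_ofReal).const_mul _).aemeasurable]
  have hterm : ∀ m : Fin d → ℤ,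
      (∫⁻ y : Fin d → ℝ, ENNReal.ofReal ((h ^ d * volR d r)⁻¹ * psi d h r v m x) *
        ENNReal.ofReal (psi d h r v m y)) = ENNReal.ofReal (psi d h r v m x) := by
    intro m
    rw [lintegral_const_mul' _ _ ENNReal.ofReal_ne_top, lintegral_ofReal_psi hh hr m,
      ← ENNReal.ofReal_mul (mul_nonneg (inv_nonneg.2 hcpos.le) (psi_nonneg m x))]
    congr 1
    rw [mul_right_comm, inv_mul_cancel₀ hcpos.ne', one_mul]
  rw [tsum_congr hterm, ← ENNReal.ofReal_tsum_of_nonneg (fun m => psi_nonneg m x)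
    (psi_hasSum hh hr x).summable, (psi_hasSum hh hr x).tsum_eq, ENNReal.ofReal_one]

lemma lintegral_Wker_left (hh : 0 < h) (hr : ∀ i, 0 < r i) (y : Fin d → ℝ) :
    ∫⁻ x : Fin d → ℝ, Wker d h r v x y = 1 := by
  simp_rw [fun x => Wker_symm (v := v) hh hr x y]
  exact lintegral_Wker hh hr y

/-- Pointwise bound: `‖(K f)(x)‖ ≤ ∫ ω(x,y) ‖f(y)‖ dy`. -/
lemma enorm_hatOp_le (hh : 0 < h) (hr : ∀ i, 0 < r i) {p : ℝ} (hp : 1 ≤ p)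
    {f : (Fin d → ℝ) → ℝ}
    (hf : MemLp f (ENNReal.ofReal p) (volume : Measure (Fin d → ℝ))) (x : Fin d → ℝ) :
    (‖hatOp d h r v f x‖₊ : ℝ≥0∞) ≤ ∫⁻ y, Wker d h r v x y * ‖f y‖₊ := by
  have hcpos := normPsi_pos (d := d) (r := r) hh hr
  set c : ℝ := h ^ d * volR d r with hc
  set T : (Fin d → ℤ) → ℝ :=
    fun m => c⁻¹ * psi d h r v m x * ∫ y, psi d h r v m y * f y with hT
  have hT0 : ∀ m ∉ psiSupp d h r v x, T m = 0 := by
    intro m hm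
    simp [hT, psi_eq_zero_of_not_mem_psiSupp hh hr hm]
  have hTns : Summable fun m => ‖T m‖ :=
    summable_of_ne_finset_zero (s := psiSupp d h r v x)
      (fun m hm => by rw [hT0 m hm, norm_zero])
  have hper : ∀ m : Fin d → ℤ, ENNReal.ofReal ‖T m‖ ≤
      ENNReal.ofReal (c⁻¹ * psi d h r v m x) *
        ∫⁻ y, ENNReal.ofReal (psi d h r v m y) * ‖f y‖₊ := by
    intro m
    have hnn : (0:ℝ) ≤ c⁻¹ * psi d h r v m x :=
      mul_nonneg (inv_nonneg.2 hcpos.le) (psi_nonneg m x)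
    have h1 : ‖T m‖ ≤ (c⁻¹ * psi d h r v m x) * ∫ y, ‖psi d h r v m y * f y‖ := by
      have hTm : T m = (c⁻¹ * psi d h r v m x) * ∫ y, psi d h r v m y * f y := rfl
      rw [hTm, Real.norm_eq_abs, abs_mul, abs_of_nonneg hnn]
      exact mul_le_mul_of_nonneg_left (by
        rw [← Real.norm_eq_abs]
        exact norm_integral_le_integral_norm _) hnn
    calc ENNReal.ofReal ‖T m‖
        ≤ ENNReal.ofReal ((c⁻¹ * psi d h r v m x) * ∫ y, ‖psi d h r v m y * f y‖) :=
          ENNReal.ofReal_le_ofReal h1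
      _ = ENNReal.ofReal (c⁻¹ * psi d h r v m x) *
          ENNReal.ofReal (∫ y, ‖psi d h r v m y * f y‖) := ENNReal.ofReal_mul hnn
      _ = ENNReal.ofReal (c⁻¹ * psi d h r v m x) *
          ∫⁻ y, ENNReal.ofReal (psi d h r v m y) * ‖f y‖₊ := by
          rw [MeasureTheory.ofReal_integral_eq_lintegral_ofReal
            (integrable_psi_mul hh hr hp hf m).norm
            (MeasureTheory.ae_of_all _ fun y => norm_nonneg _)]
          congr 1
          refine lintegral_congr fun y => ?_
          rw [Real.norm_eq_abs, abs_mul, abs_of_nonneg (psi_nonneg m y),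
            ENNReal.ofReal_mul (psi_nonneg m y), ← Real.enorm_eq_ofReal_abs]
          rfl
  have he : hatOp d h r v f x = ∑' m, T m := rfl
  calc (‖hatOp d h r v f x‖₊ : ℝ≥0∞)
      = ENNReal.ofReal ‖∑' m, T m‖ := by
        rw [ofReal_norm, he]
        rfl
    _ ≤ ENNReal.ofReal (∑' m, ‖T m‖) :=
        ENNReal.ofReal_le_ofReal (norm_tsum_le_tsum_norm hTns)
    _ = ∑' m, ENNReal.ofReal ‖T m‖ :=
        ENNReal.ofReal_tsum_of_nonneg (fun m => norm_nonneg _) hTns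
    _ ≤ ∑' m, ENNReal.ofReal (c⁻¹ * psi d h r v m x) *
          ∫⁻ y, ENNReal.ofReal (psi d h r v m y) * ‖f y‖₊ :=
        ENNReal.tsum_le_tsum hper
    _ = ∑' m, ∫⁻ y, ENNReal.ofReal (c⁻¹ * psi d h r v m x) *
          (ENNReal.ofReal (psi d h r v m y) * ‖f y‖₊) := by
        refine tsum_congr fun m => ?_
        rw [lintegral_const_mul' _ _ ENNReal.ofReal_ne_top]
    _ = ∫⁻ y, ∑' m, ENNReal.ofReal (c⁻¹ * psi d h r v m x) *
          (ENNReal.ofReal (psi d h r v m y) * ‖f y‖₊) := by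
        exact (MeasureTheory.lintegral_tsum fun m =>
          ((((continuous_psi m).measurable).ennreal_ofReal.aemeasurable.mul
            hf.aestronglyMeasurable.enorm).const_mul _)).symm
    _ = ∫⁻ y, Wker d h r v x y * ‖f y‖₊ := by
        refine lintegral_congr fun y => ?_
        simp_rw [← mul_assoc]
        rw [ENNReal.tsum_mul_right]
        rfl
end AuxKernel

section AuxMain
open MeasureTheory ENNReal

variable {d : ℕ} {h : ℝ} {r : Fin d → ℕ} {v : Fin d → ℝ}

lemma jensen_Wker (hh : 0 < h) (hr : ∀ i, 0 < r i) {p : ℝ} (hp : 1 ≤ p)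
    {F : (Fin d → ℝ) → ℝ≥0∞} (hF : AEMeasurable F (volume : Measure (Fin d → ℝ)))
    (x : Fin d → ℝ) :
    (∫⁻ y, Wker d h r v x y * F y) ^ p ≤ ∫⁻ y, Wker d h r v x y * F y ^ p := by
  rcases eq_or_lt_of_le hp with hp1 | hp1
  · rw [← hp1]
    simp [ENNReal.rpow_one]
  · have hpq : p.HolderConjugate (Real.conjExponent p) := Real.HolderConjugate.conjExponent hp1
    set q := Real.conjExponent p with hqdef
    have hppos : 0 < p := hpq.pos
    have hqpos : 0 < q := hpq.symm.pos
    have hW := measurable_Wker_right (h := h) (r := r) (v := v) x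
    have hf1 : AEMeasurable (fun y => (Wker d h r v x y) ^ (1/p) * F y) volume :=
      ((ENNReal.continuous_rpow_const.measurable.comp hW).aemeasurable).mul hF
    have hg1 : AEMeasurable (fun y => (Wker d h r v x y) ^ (1/q)) volume :=
      (ENNReal.continuous_rpow_const.measurable.comp hW).aemeasurable
    have hHolder := ENNReal.lintegral_mul_le_Lp_mul_Lq volume hpq hf1 hg1
    have hfg : ∀ y, (Wker d h r v x y) ^ (1/p) * F y * (Wker d h r v x y) ^ (1/q)
        = Wker d h r v x y * F y := by
      intro y
      rw [mul_right_comm, ← ENNReal.rpow_add_of_nonneg (1/p) (1/q)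
        (by positivity) (by positivity)]
      rw [one_div, one_div, hpq.inv_add_inv_eq_one, ENNReal.rpow_one]
    have hfp : ∀ y, ((Wker d h r v x y) ^ (1/p) * F y) ^ p
        = Wker d h r v x y * F y ^ p := by
      intro y
      rw [ENNReal.mul_rpow_of_nonneg _ _ hppos.le, ← ENNReal.rpow_mul,
        one_div_mul_cancel hppos.ne', ENNReal.rpow_one]
    have hgq : ∀ y, ((Wker d h r v x y) ^ (1/q)) ^ q = Wker d h r v x y := by
      intro y
      rw [← ENNReal.rpow_mul, one_div_mul_cancel hqpos.ne', ENNReal.rpow_one]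
    have hmain : ∫⁻ y, Wker d h r v x y * F y ≤
        (∫⁻ y, Wker d h r v x y * F y ^ p) ^ (1/p) := by
      calc ∫⁻ y, Wker d h r v x y * F y
          = ∫⁻ y, ((fun y => (Wker d h r v x y) ^ (1/p) * F y) *
              (fun y => (Wker d h r v x y) ^ (1/q))) y := by
            refine lintegral_congr fun y => ?_
            simp only [Pi.mul_apply]
            rw [hfg y]
        _ ≤ (∫⁻ y, ((Wker d h r v x y) ^ (1/p) * F y) ^ p) ^ (1/p) *
              (∫⁻ y, ((Wker d h r v x y) ^ (1/q)) ^ q) ^ (1/q) := hHolder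
        _ = (∫⁻ y, Wker d h r v x y * F y ^ p) ^ (1/p) := by
            rw [lintegral_congr hfp, lintegral_congr hgq, lintegral_Wker hh hr x,
              ENNReal.one_rpow, mul_one]
    calc (∫⁻ y, Wker d h r v x y * F y) ^ p
        ≤ ((∫⁻ y, Wker d h r v x y * F y ^ p) ^ (1/p)) ^ p :=
          ENNReal.rpow_le_rpow hmain hppos.le
      _ = ∫⁻ y, Wker d h r v x y * F y ^ p := by
          rw [← ENNReal.rpow_mul, one_div_mul_cancel hppos.ne', ENNReal.rpow_one]

end AuxMain

/-- Corollary 3.0(i): `K` maps `L^p(ℝ^d)` into itself and `‖K f‖_p ≤ ‖f‖_p`. -/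
theorem hatOp_Lp_contraction (d : ℕ) (hd : 1 ≤ d) (h : ℝ) (hh : 0 < h)
    (r : Fin d → ℕ) (hr : ∀ i, 0 < r i) (v : Fin d → ℝ) (p : ℝ) (hp : 1 ≤ p)
    (f : (Fin d → ℝ) → ℝ) (hf : MemLp f (ENNReal.ofReal p) (volume : Measure (Fin d → ℝ))) :
    MemLp (hatOp d h r v f) (ENNReal.ofReal p) (volume : Measure (Fin d → ℝ)) ∧
      eLpNorm (hatOp d h r v f) (ENNReal.ofReal p) (volume : Measure (Fin d → ℝ)) ≤
        eLpNorm f (ENNReal.ofReal p) (volume : Measure (Fin d → ℝ)) := by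
  have hp0 : 0 < p := lt_of_lt_of_le one_pos hp
  have hq0 : ENNReal.ofReal p ≠ 0 := by
    rw [Ne, ENNReal.ofReal_eq_zero]
    linarith
  have hqt : ENNReal.ofReal p ≠ ⊤ := ENNReal.ofReal_ne_top
  have htoReal : (ENNReal.ofReal p).toReal = p := ENNReal.toReal_ofReal hp0.le
  -- replace f by a strongly measurable representative g
  set g : (Fin d → ℝ) → ℝ := hf.1.mk f with hgdef
  have hgm : StronglyMeasurable g := hf.1.stronglyMeasurable_mk
  have hfg : f =ᵐ[volume] g := hf.1.ae_eq_mk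
  have hOpeq : hatOp d h r v f = hatOp d h r v g := by
    funext x
    unfold hatOp
    refine tsum_congr fun m => ?_
    congr 1
    exact integral_congr_ae (hfg.mono fun y hy => by dsimp only; rw [hy])
  have hgLp : MemLp g (ENNReal.ofReal p) volume :=
    ⟨hgm.aestronglyMeasurable, by rw [← eLpNorm_congr_ae hfg]; exact hf.2⟩
  set F : (Fin d → ℝ) → ENNReal := fun y => (‖g y‖₊ : ENNReal) with hFdef
  have hFmeas : Measurable F := hgm.measurable.enorm
  -- strong measurability of `hatOp g`
  have hOpMeas : Measurable (hatOp d h r v g) := by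
    refine measurable_of_tendsto_metrizable' Filter.atTop
      (f := fun s : Finset (Fin d → ℤ) => fun x =>
        ∑ m ∈ s, (h ^ d * volR d r)⁻¹ * psi d h r v m x * ∫ y, psi d h r v m y * g y)
      (fun s => (continuous_finset_sum s fun m _ =>
        ((continuous_const.mul (continuous_psi m)).mul continuous_const)).measurable) ?_
    rw [tendsto_pi_nhds]
    intro x
    have hT0 : ∀ m ∉ psiSupp d h r v x,
        (h ^ d * volR d r)⁻¹ * psi d h r v m x * ∫ y, psi d h r v m y * g y = 0 := by
      intro m hm
      rw [psi_eq_zero_of_not_mem_psiSupp hh hr hm, mul_zero, zero_mul]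
    have hsummable : Summable fun m : Fin d → ℤ =>
        (h ^ d * volR d r)⁻¹ * psi d h r v m x * ∫ y, psi d h r v m y * g y :=
      summable_of_ne_finset_zero (s := psiSupp d h r v x) hT0
    exact hsummable.hasSum
  -- main estimate
  have key : ∀ x : Fin d → ℝ, (‖hatOp d h r v g x‖₊ : ENNReal) ^ p ≤
      ∫⁻ y, Wker d h r v x y * F y ^ p := fun x =>
    le_trans (ENNReal.rpow_le_rpow (enorm_hatOp_le hh hr hp hgLp x) hp0.le)
      (jensen_Wker hh hr hp hFmeas.aemeasurable x)
  have hmeas_prod : AEMeasurable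
      (Function.uncurry fun x y : Fin d → ℝ => Wker d h r v x y * F y ^ p)
      ((volume : Measure (Fin d → ℝ)).prod volume) := by
    have h1 : Measurable fun z : (Fin d → ℝ) × (Fin d → ℝ) => Wker d h r v z.1 z.2 :=
      measurable_Wker_uncurry
    have h2 : Measurable fun z : (Fin d → ℝ) × (Fin d → ℝ) => F z.2 ^ p :=
      ENNReal.continuous_rpow_const.measurable.comp (hFmeas.comp measurable_snd)
    exact (h1.mul h2).aemeasurable
  have swap : (∫⁻ x, ∫⁻ y, Wker d h r v x y * F y ^ p) = ∫⁻ y, F y ^ p := by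
    rw [lintegral_lintegral_swap hmeas_prod]
    calc ∫⁻ y, ∫⁻ x, Wker d h r v x y * F y ^ p
        = ∫⁻ y, (∫⁻ x, Wker d h r v x y) * F y ^ p := by
          refine lintegral_congr fun y => ?_
          refine lintegral_mul_const'' _ ?_
          have : (fun x => Wker d h r v x y) = fun x => Wker d h r v y x := by
            funext x
            exact Wker_symm hh hr x y
          rw [this]
          exact (measurable_Wker_right y).aemeasurable
      _ = ∫⁻ y, F y ^ p := by
          refine lintegral_congr fun y => ?_
          rw [lintegral_Wker_left hh hr y, one_mul]
  have hbound : eLpNorm (hatOp d h r v g) (ENNReal.ofReal p) volume ≤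
      eLpNorm g (ENNReal.ofReal p) volume := by
    rw [eLpNorm_eq_lintegral_rpow_enorm_toReal hq0 hqt, eLpNorm_eq_lintegral_rpow_enorm_toReal hq0 hqt,
      htoReal]
    refine ENNReal.rpow_le_rpow ?_ (by positivity)
    calc (∫⁻ x, (‖hatOp d h r v g x‖₊ : ENNReal) ^ p)
        ≤ ∫⁻ x, ∫⁻ y, Wker d h r v x y * F y ^ p := lintegral_mono key
      _ = ∫⁻ y, F y ^ p := swap
  have hg2 : eLpNorm g (ENNReal.ofReal p) volume < ⊤ := by
    rw [← eLpNorm_congr_ae hfg]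
    exact hf.2
  constructor
  · rw [hOpeq]
    exact ⟨hOpMeas.aestronglyMeasurable, lt_of_le_of_lt hbound hg2⟩
  · rw [hOpeq, eLpNorm_congr_ae hfg]
    exact hbound
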